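/- Every ideal I of the monoid IOF_n^par is of the form I = I_{P*} for some admissible set P* ⊆ P(n̄); indeed P* = {dom(a) : a ∈ I} is admissible and I = I_{P*}. -/

import Mathlib

namespace IOFpar

/-- A partial injection on the chain `{1, …, n}`: a partial function with domain and
image contained in `{1, …, n}` that is injective where defined. -/
structure PInj (n : ℕ) where
  f : ℕ → Option ℕ
  mem_bounds : ∀ ⦃x y : ℕ⦄, f x = some y → x ∈ Finset.Icc 1 n ∧ y ∈ Finset.Icc 1 n
  inj : ∀ ⦃x₁ x₂ y : ℕ⦄, f x₁ = some y → f x₂ = some y → x₁ = x₂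

/-- The domain of a partial injection. -/
def PInj.dom {n : ℕ} (α : PInj n) : Finset ℕ :=
  (Finset.Icc 1 n).filter fun x => (α.f x).isSome

open Classical in
/-- The image of a partial injection. -/
noncomputable def PInj.im {n : ℕ} (α : PInj n) : Finset ℕ :=
  (Finset.Icc 1 n).filter fun y => ∃ x, α.f x = some y

/-- The rank of a partial injection: the size of its domain. -/
def PInj.rank {n : ℕ} (α : PInj n) : ℕ := α.dom.card

/-- The value of `α` at `x` (with junk value `0` outside the domain). -/
def PInj.app {n : ℕ} (α : PInj n) (x : ℕ) : ℕ := (α.f x).getD 0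

/-- Composition of partial injections: `α.comp β` applies `α` first, then `β`
(so it corresponds to the product `αβ` with arguments written on the left). -/
def PInj.comp {n : ℕ} (α β : PInj n) : PInj n where
  f x := (α.f x).bind β.f
  mem_bounds := by
    intro x y h
    rcases Option.bind_eq_some_iff.mp h with ⟨z, hz, hzy⟩
    exact ⟨(α.mem_bounds hz).1, (β.mem_bounds hzy).2⟩
  inj := by
    intro x₁ x₂ y h₁ h₂
    rcases Option.bind_eq_some_iff.mp h₁ with ⟨z₁, hz₁, hz₁y⟩
    rcases Option.bind_eq_some_iff.mp h₂ with ⟨z₂, hz₂, hz₂y⟩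
    obtain rfl : z₁ = z₂ := β.inj hz₁y hz₂y
    exact α.inj hz₁ hz₂

/-- The empty transformation `ε`. -/
def epsilon (n : ℕ) : PInj n where
  f _ := none
  mem_bounds := by intro x y h; simp at h
  inj := by intro x₁ x₂ y h; simp at h

/-- The fence (zig-zag) order on `{1, …, n}`: `k ≺ m` iff `|k - m| = 1`, `k` is odd
and `m` is even. -/
def fence (k m : ℕ) : Prop := (m = k + 1 ∨ k = m + 1) ∧ Odd k ∧ Even m

/-- `IOF n` is the set `IOF_n^par` of all partial injections on `{1, …, n}` that are
order-preserving, parity-preserving, fence-preserving, and whose inverse is also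
fence-preserving. -/
def IOF (n : ℕ) : Set (PInj n) :=
  {α | (∀ ⦃x y x' y' : ℕ⦄, α.f x = some x' → α.f y = some y' → x < y → x' < y') ∧
       (∀ ⦃x y : ℕ⦄, α.f x = some y → x % 2 = y % 2) ∧
       (∀ ⦃x y x' y' : ℕ⦄, α.f x = some x' → α.f y = some y' → fence x y → fence x' y') ∧
       (∀ ⦃x y x' y' : ℕ⦄, α.f x = some x' → α.f y = some y' → fence x' y' → fence x y)}

/-- The increasing enumeration of a finite set of naturals. -/
def sortedList (A : Finset ℕ) : List ℕ := A.sort (· ≤ ·)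

/-- The relation `∼` on subsets of `{1, …, n}`:
`A ∼ B` iff `|A| = |B|`, corresponding elements (in increasing order) have the
same parity, and consecutive elements are at distance 1 in `A` iff they are in `B`. -/
def sim (A B : Finset ℕ) : Prop :=
  A.card = B.card ∧
  (∀ (r : ℕ) (hA : r < (sortedList A).length) (hB : r < (sortedList B).length),
    (sortedList A)[r] % 2 = (sortedList B)[r] % 2) ∧
  (∀ (r : ℕ) (hA : r + 1 < (sortedList A).length) (hB : r + 1 < (sortedList B).length),
    ((sortedList A)[r + 1] = (sortedList A)[r] + 1 ↔
      (sortedList B)[r + 1] = (sortedList B)[r] + 1))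

/-- `P ⊆ P(n̄)` is admissible: it contains `∅`, is convex, and is closed under `∼`. -/
def Admissible (n : ℕ) (P : Set (Finset ℕ)) : Prop :=
  (∀ A ∈ P, A ⊆ Finset.Icc 1 n) ∧
  (∅ : Finset ℕ) ∈ P ∧
  (∀ A ∈ P, ∀ B ∈ P, ∀ C : Finset ℕ, A ⊆ C → C ⊆ B → C ∈ P) ∧
  (∀ y ∈ P, ∀ z : Finset ℕ, z ⊆ Finset.Icc 1 n → sim z y → z ∈ P)

/-- `I_X = {α ∈ IOF_n^par : dom(α) ∈ X}`. -/
def IX (n : ℕ) (X : Set (Finset ℕ)) : Set (PInj n) :=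
  {α | α ∈ IOF n ∧ α.dom ∈ X}

/-- An ideal of the monoid `IOF_n^par`. -/
def IsIdeal (n : ℕ) (I : Set (PInj n)) : Prop :=
  I.Nonempty ∧ I ⊆ IOF n ∧ ∀ a ∈ I, ∀ b ∈ IOF n, a.comp b ∈ I ∧ b.comp a ∈ I

/-- `del y t` is `y^[t+1]` in the paper's (1-based) notation: `y` with its `t`-th
smallest element removed (`t` being 0-based here). -/
def del (y : Finset ℕ) (t : ℕ) : Finset ℕ := y.erase ((sortedList y).getD t 0)

/-- `x ⊑ y`: `x` is obtained from `y` by removing one element. -/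
def sqsub (x y : Finset ℕ) : Prop := ∃ t < y.card, x = del y t

/-- `A_Γ = {Δ ∈ P : Δ ∼ Γ}`. -/
def Aset (P : Set (Finset ℕ)) (Γ : Finset ℕ) : Set (Finset ℕ) :=
  {Δ ∈ P | sim Δ Γ}

/-- `B_Γ = {Δ^[t] : Δ ∈ A_Γ, t ∈ {1,…,|Δ|}}`. -/
def Bset (P : Set (Finset ℕ)) (Γ : Finset ℕ) : Set (Finset ℕ) :=
  {D | ∃ Δ ∈ Aset P Γ, ∃ t < Δ.card, D = del Δ t}

/-- `B = {B_Γ : Γ ∈ P, |Γ| ≥ 2, |A_Γ| ≥ 2}`. -/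
def Bfam (P : Set (Finset ℕ)) : Set (Set (Finset ℕ)) :=
  {E | ∃ Γ ∈ P, 2 ≤ Γ.card ∧ 2 ≤ (Aset P Γ).ncard ∧ E = Bset P Γ}

/-- `C = {{g} : g ∈ P, (g ⊑ y for some y ∈ P with y ≁ z for all z ∈ P \ {y}) or
(g ⋢ z for all z ∈ P)}`. -/
def Cfam (P : Set (Finset ℕ)) : Set (Set (Finset ℕ)) :=
  {D | ∃ g ∈ P, D = {g} ∧
    ((∃ y ∈ P, sqsub g y ∧ ∀ z ∈ P, z ≠ y → ¬ sim y z) ∨ (∀ z ∈ P, ¬ sqsub g z))}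

/-- `BC_{Δ₁} = {Δ ∈ B ∪ C : x ∼ y for all x ∈ Δ, y ∈ Δ₁}`. -/
def BCset (P : Set (Finset ℕ)) (Δ₁ : Set (Finset ℕ)) : Set (Set (Finset ℕ)) :=
  {Δ ∈ Bfam P ∪ Cfam P | ∀ x ∈ Δ, ∀ y ∈ Δ₁, sim x y}

/-- `T_Δ = {c ∈ I_P : dom(c) ∈ Δ, im(c) ∈ Δ}`. -/
def Tset (n : ℕ) (P : Set (Finset ℕ)) (Δ : Set (Finset ℕ)) : Set (PInj n) :=
  {c ∈ IX n P | c.dom ∈ Δ ∧ c.im ∈ Δ}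

/-- `T_Q` for a pair `Q = (Q₁, Q₂)`. -/
def TQ (n : ℕ) (P : Set (Finset ℕ)) (Q₁ Q₂ : Set (Set (Finset ℕ))) : Set (PInj n) :=
  {c ∈ IX n P | (∃ Δ ∈ Q₁, c.dom ∈ Δ) ∧ (∃ Δ ∈ Q₂, c.im ∈ Δ)}

/-- `I_P^u`: the elements of `I_P` that are not expressible in the special product form. -/
def Iu (n : ℕ) (P : Set (Finset ℕ)) : Set (PInj n) :=
  {α ∈ IX n P | ¬ ∃ y₁ ∈ P, ∃ z₁ ∈ P, ∃ y₂ ∈ P, ∃ z₂ ∈ P, ∃ r < y₁.card, ∃ s < y₁.card,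
    y₁.card = z₁.card ∧ 2 ≤ y₁.card ∧
    sim y₂ y₁ ∧ sim z₂ z₁ ∧
    del y₁ r = y₁ ∩ z₁ ∧ del z₁ s = y₁ ∩ z₁ ∧
    sim (del y₂ r) (del z₂ s) ∧ sim (del z₂ s) (y₁ ∩ z₁) ∧
    α.dom = del y₂ r ∧ α.im = del z₂ s}

/-- `T` is a subsemigroup of `S` (a subset of `S` closed under composition). -/
def IsSubsemigroup (n : ℕ) (S T : Set (PInj n)) : Prop :=
  T ⊆ S ∧ ∀ a ∈ T, ∀ b ∈ T, a.comp b ∈ T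

/-- `T` is a maximal subsemigroup of `S`. -/
def IsMaxSubsemigroup (n : ℕ) (S T : Set (PInj n)) : Prop :=
  IsSubsemigroup n S T ∧ T ≠ S ∧
  ∀ U : Set (PInj n), IsSubsemigroup n S U → T ⊆ U → U ⊆ S → U = T ∨ U = S

/-- The left "translate set" `Ma` in the monoid `M = IOF_n^par`. -/
def lset (n : ℕ) (a : PInj n) : Set (PInj n) := {c | ∃ m ∈ IOF n, m.comp a = c}

/-- The right "translate set" `aM` in the monoid `M = IOF_n^par`. -/
def rset (n : ℕ) (a : PInj n) : Set (PInj n) := {c | ∃ m ∈ IOF n, a.comp m = c}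

/-- The two-sided "translate set" `MaM` in the monoid `M = IOF_n^par`. -/
def jset (n : ℕ) (a : PInj n) : Set (PInj n) :=
  {c | ∃ m₁ ∈ IOF n, ∃ m₂ ∈ IOF n, (m₁.comp a).comp m₂ = c}


/-! ### Auxiliary lemmas -/

theorem PInj.ext' {n : ℕ} {α β : PInj n} (h : α.f = β.f) : α = β := by
  cases α; cases β; simp_all

lemma PInj.mem_dom {n : ℕ} {α : PInj n} {x : ℕ} :
    x ∈ α.dom ↔ ∃ y, α.f x = some y := by
  unfold PInj.dom
  rw [Finset.mem_filter]
  constructor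
  · rintro ⟨-, h⟩
    exact Option.isSome_iff_exists.mp h
  · rintro ⟨y, hy⟩
    exact ⟨(α.mem_bounds hy).1, Option.isSome_iff_exists.mpr ⟨y, hy⟩⟩

lemma PInj.dom_subset {n : ℕ} (α : PInj n) : α.dom ⊆ Finset.Icc 1 n :=
  Finset.filter_subset _ _

lemma sorted_getElem_lt {L : List ℕ} (hL : L.Pairwise (· < ·)) {i j : ℕ}
    (hi : i < L.length) (hj : j < L.length) (hij : i < j) : L[i] < L[j] :=
  List.pairwise_iff_getElem.mp hL i j hi hj hij

lemma sorted_lt_index {L : List ℕ} (hL : L.Pairwise (· < ·)) {i j : ℕ}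
    (hi : i < L.length) (hj : j < L.length) (h : L[i] < L[j]) : i < j := by
  rcases lt_trichotomy i j with h' | rfl | h'
  · exact h'
  · omega
  · exact absurd (sorted_getElem_lt hL hj hi h') (by omega)

lemma sorted_adj {L : List ℕ} (hL : L.Pairwise (· < ·)) {i j : ℕ}
    (hi : i < L.length) (hj : j < L.length) (h : L[j] = L[i] + 1) : j = i + 1 := by
  have hij : i < j := sorted_lt_index hL hi hj (by omega)
  by_contra hc
  have h1 : i + 1 < j := by omega
  have h2 : i + 1 < L.length := by omega
  have h3 := sorted_getElem_lt hL h2 hj h1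
  have h4 := sorted_getElem_lt hL hi h2 (Nat.lt_succ_self i)
  omega

lemma sortedList_sorted (A : Finset ℕ) : (sortedList A).Pairwise (· < ·) :=
  (Finset.sortedLT_sort A).pairwise

lemma sortedList_length (A : Finset ℕ) : (sortedList A).length = A.card :=
  Finset.length_sort _

lemma mem_sortedList {A : Finset ℕ} {x : ℕ} : x ∈ sortedList A ↔ x ∈ A :=
  Finset.mem_sort _

/-- The empty transformation is in `IOF n`. -/
lemma epsilon_mem_IOF (n : ℕ) : epsilon n ∈ IOF n :=
  ⟨fun x y x' y' h => by simp [epsilon] at h,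
   fun x y h => by simp [epsilon] at h,
   fun x y x' y' h => by simp [epsilon] at h,
   fun x y x' y' h => by simp [epsilon] at h⟩

open Classical in
/-- The inverse of a partial injection. -/
noncomputable def PInj.inv {n : ℕ} (α : PInj n) : PInj n where
  f y := if h : ∃ x, α.f x = some y then some h.choose else none
  mem_bounds := by
    intro y x h
    split at h
    · rename_i h'
      have e : h'.choose = x := Option.some.inj h
      have hs := h'.choose_spec
      rw [e] at hs
      exact ⟨(α.mem_bounds hs).2, (α.mem_bounds hs).1⟩
    · simp at h
  inj := by
    intro y₁ y₂ x h₁ h₂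
    split at h₁
    · split at h₂
      · rename_i h₁' h₂'
        have e₁ : h₁'.choose = x := Option.some.inj h₁
        have e₂ : h₂'.choose = x := Option.some.inj h₂
        have hs₁ := h₁'.choose_spec
        have hs₂ := h₂'.choose_spec
        rw [e₁] at hs₁
        rw [e₂] at hs₂
        exact Option.some.inj (hs₁.symm.trans hs₂)
      · simp at h₂
    · simp at h₁

open Classical in
lemma PInj.inv_f_eq_some {n : ℕ} {α : PInj n} {x y : ℕ} :
    α.inv.f y = some x ↔ α.f x = some y := by
  constructor
  · intro h
    unfold PInj.inv at h
    dsimp only at h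
    split at h
    · rename_i h'
      obtain rfl : h'.choose = x := Option.some.inj h
      exact h'.choose_spec
    · simp at h
  · intro h
    have hex : ∃ x', α.f x' = some y := ⟨x, h⟩
    have : hex.choose = x := α.inj hex.choose_spec h
    unfold PInj.inv
    dsimp only
    rw [dif_pos hex, this]

lemma PInj.inv_mem_IOF {n : ℕ} {α : PInj n} (hα : α ∈ IOF n) : α.inv ∈ IOF n := by
  obtain ⟨ho, hp, hf, hfi⟩ := hα
  refine ⟨?_, ?_, ?_, ?_⟩
  · intro x y x' y' hx hy hxy
    rw [PInj.inv_f_eq_some] at hx hy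
    rcases lt_trichotomy x' y' with h | rfl | h
    · exact h
    · have := hx.symm.trans hy
      simp only [Option.some.injEq] at this
      omega
    · have := ho hy hx h
      omega
  · intro x y h
    rw [PInj.inv_f_eq_some] at h
    exact (hp h).symm
  · intro x y x' y' hx hy hff
    rw [PInj.inv_f_eq_some] at hx hy
    exact hfi hx hy hff
  · intro x y x' y' hx hy hff
    rw [PInj.inv_f_eq_some] at hx hy
    exact hf hx hy hff

/-- The identity on a subset `G` of `{1, …, n}`. -/
def idOn (n : ℕ) (G : Finset ℕ) : PInj n where
  f x := if x ∈ G ∧ x ∈ Finset.Icc 1 n then some x else none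
  mem_bounds := by
    intro x y h
    split at h
    · rename_i h'
      obtain rfl : x = y := Option.some.inj h
      exact ⟨h'.2, h'.2⟩
    · simp at h
  inj := by
    intro x₁ x₂ y h₁ h₂
    split at h₁
    · split at h₂
      · rw [Option.some.inj h₁, Option.some.inj h₂]
      · simp at h₂
    · simp at h₁

lemma idOn_f_eq_some {n : ℕ} {G : Finset ℕ} {x y : ℕ} :
    (idOn n G).f x = some y ↔ x = y ∧ x ∈ G ∧ x ∈ Finset.Icc 1 n := by
  unfold idOn
  dsimp only
  split
  · rename_i h'
    simp only [Option.some.injEq]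
    constructor
    · rintro rfl; exact ⟨rfl, h'⟩
    · rintro ⟨rfl, -⟩; rfl
  · rename_i h'
    constructor
    · intro h; simp at h
    · rintro ⟨rfl, h⟩
      exact absurd h h'

lemma idOn_mem_IOF (n : ℕ) (G : Finset ℕ) : idOn n G ∈ IOF n := by
  refine ⟨?_, ?_, ?_, ?_⟩
  · intro x y x' y' hx hy h
    obtain ⟨rfl, -⟩ := idOn_f_eq_some.mp hx
    obtain ⟨rfl, -⟩ := idOn_f_eq_some.mp hy
    exact h
  · intro x y h
    obtain ⟨rfl, -⟩ := idOn_f_eq_some.mp h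
    rfl
  · intro x y x' y' hx hy h
    obtain ⟨rfl, -⟩ := idOn_f_eq_some.mp hx
    obtain ⟨rfl, -⟩ := idOn_f_eq_some.mp hy
    exact h
  · intro x y x' y' hx hy h
    obtain ⟨rfl, -⟩ := idOn_f_eq_some.mp hx
    obtain ⟨rfl, -⟩ := idOn_f_eq_some.mp hy
    exact h

lemma sortedList_length_eq {z y : Finset ℕ} (hcard : z.card = y.card) :
    (sortedList z).length = (sortedList y).length := by
  rw [sortedList_length, sortedList_length, hcard]

/-- The order isomorphism between two related subsets, as a partial injection. -/
def gammaOf (n : ℕ) (z y : Finset ℕ) (hz : z ⊆ Finset.Icc 1 n)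
    (hy : y ⊆ Finset.Icc 1 n) (hcard : z.card = y.card) : PInj n where
  f x := if x ∈ z then some ((sortedList y).getD ((sortedList z).idxOf x) 0) else none
  mem_bounds := by
    intro x w h
    split at h
    · rename_i hx
      have hi : (sortedList z).idxOf x < (sortedList z).length :=
        List.idxOf_lt_length_iff.mpr (mem_sortedList.mpr hx)
      have hi' : (sortedList z).idxOf x < (sortedList y).length := by
        rw [← sortedList_length_eq hcard]; exact hi
      rw [List.getD_eq_getElem _ _ hi'] at h
      have hw : w ∈ y := by
        rw [← Option.some.inj h]
        exact mem_sortedList.mp (List.getElem_mem hi')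
      exact ⟨hz hx, hy hw⟩
    · simp at h
  inj := by
    intro x₁ x₂ w h₁ h₂
    split at h₁
    · split at h₂
      · rename_i hx₁ hx₂
        have hi₁ : (sortedList z).idxOf x₁ < (sortedList z).length :=
          List.idxOf_lt_length_iff.mpr (mem_sortedList.mpr hx₁)
        have hi₂ : (sortedList z).idxOf x₂ < (sortedList z).length :=
          List.idxOf_lt_length_iff.mpr (mem_sortedList.mpr hx₂)
        have hi₁' : (sortedList z).idxOf x₁ < (sortedList y).length := by
          rw [← sortedList_length_eq hcard]; exact hi₁
        have hi₂' : (sortedList z).idxOf x₂ < (sortedList y).length := by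
          rw [← sortedList_length_eq hcard]; exact hi₂
        rw [List.getD_eq_getElem _ _ hi₁'] at h₁
        rw [List.getD_eq_getElem _ _ hi₂'] at h₂
        have he : (sortedList y)[(sortedList z).idxOf x₁] =
            (sortedList y)[(sortedList z).idxOf x₂] := by
          rw [Option.some.inj h₁, Option.some.inj h₂]
        have hidx : (sortedList z).idxOf x₁ = (sortedList z).idxOf x₂ := by
          by_contra hc
          rcases Nat.lt_or_ge ((sortedList z).idxOf x₁) ((sortedList z).idxOf x₂) with h | h
          · exact absurd (sorted_getElem_lt (sortedList_sorted y) hi₁' hi₂' h) (by omega)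
          · have : (sortedList z).idxOf x₂ < (sortedList z).idxOf x₁ := by omega
            exact absurd (sorted_getElem_lt (sortedList_sorted y) hi₂' hi₁' this) (by omega)
        calc x₁ = (sortedList z)[(sortedList z).idxOf x₁] := (List.getElem_idxOf hi₁).symm
          _ = (sortedList z)[(sortedList z).idxOf x₂] := by simp only [hidx]
          _ = x₂ := List.getElem_idxOf hi₂
      · simp at h₂
    · simp at h₁

lemma gammaOf_spec {n : ℕ} {z y : Finset ℕ} {hz : z ⊆ Finset.Icc 1 n}
    {hy : y ⊆ Finset.Icc 1 n} {hcard : z.card = y.card} {x w : ℕ}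
    (h : (gammaOf n z y hz hy hcard).f x = some w) :
    ∃ i, ∃ (h1 : i < (sortedList z).length) (h2 : i < (sortedList y).length),
      (sortedList z)[i] = x ∧ (sortedList y)[i] = w := by
  unfold gammaOf at h
  dsimp only at h
  split at h
  · rename_i hx
    have hi : (sortedList z).idxOf x < (sortedList z).length :=
      List.idxOf_lt_length_iff.mpr (mem_sortedList.mpr hx)
    have hi' : (sortedList z).idxOf x < (sortedList y).length := by
      rw [← sortedList_length_eq hcard]; exact hi
    rw [List.getD_eq_getElem _ _ hi'] at h
    exact ⟨_, hi, hi', List.getElem_idxOf hi, Option.some.inj h⟩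
  · simp at h

lemma gammaOf_f_some {n : ℕ} {z y : Finset ℕ} {hz : z ⊆ Finset.Icc 1 n}
    {hy : y ⊆ Finset.Icc 1 n} {hcard : z.card = y.card} {x : ℕ} (hx : x ∈ z) :
    ∃ w, (gammaOf n z y hz hy hcard).f x = some w := by
  refine ⟨(sortedList y).getD ((sortedList z).idxOf x) 0, ?_⟩
  unfold gammaOf
  dsimp only
  rw [if_pos hx]

lemma gammaOf_dom {n : ℕ} {z y : Finset ℕ} {hz : z ⊆ Finset.Icc 1 n}
    {hy : y ⊆ Finset.Icc 1 n} {hcard : z.card = y.card} :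
    (gammaOf n z y hz hy hcard).dom = z := by
  ext x
  rw [PInj.mem_dom]
  constructor
  · rintro ⟨w, hw⟩
    obtain ⟨i, h1, h2, rfl, -⟩ := gammaOf_spec hw
    exact mem_sortedList.mp (List.getElem_mem h1)
  · exact gammaOf_f_some

lemma gammaOf_maps_to {n : ℕ} {z y : Finset ℕ} {hz : z ⊆ Finset.Icc 1 n}
    {hy : y ⊆ Finset.Icc 1 n} {hcard : z.card = y.card} {x w : ℕ}
    (h : (gammaOf n z y hz hy hcard).f x = some w) : w ∈ y := by
  obtain ⟨i, h1, h2, -, rfl⟩ := gammaOf_spec h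
  exact mem_sortedList.mp (List.getElem_mem h2)

lemma gammaOf_mem_IOF {n : ℕ} {z y : Finset ℕ} {hz : z ⊆ Finset.Icc 1 n}
    {hy : y ⊆ Finset.Icc 1 n} {hcard : z.card = y.card} (hsim : sim z y) :
    gammaOf n z y hz hy hcard ∈ IOF n := by
  obtain ⟨-, hpar, hgap⟩ := hsim
  refine ⟨?_, ?_, ?_, ?_⟩
  · -- order-preserving
    intro x₁ x₂ w₁ w₂ h₁ h₂ hlt
    obtain ⟨i, hi1, hi2, rfl, rfl⟩ := gammaOf_spec h₁
    obtain ⟨j, hj1, hj2, rfl, rfl⟩ := gammaOf_spec h₂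
    exact sorted_getElem_lt (sortedList_sorted y) hi2 hj2
      (sorted_lt_index (sortedList_sorted z) hi1 hj1 hlt)
  · -- parity-preserving
    intro x w h
    obtain ⟨i, hi1, hi2, rfl, rfl⟩ := gammaOf_spec h
    exact hpar i hi1 hi2
  · -- fence-preserving
    intro x₁ x₂ w₁ w₂ h₁ h₂ hf
    obtain ⟨i, hi1, hi2, hzi, hyi⟩ := gammaOf_spec h₁
    obtain ⟨j, hj1, hj2, hzj, hyj⟩ := gammaOf_spec h₂
    subst hzi hyi hzj hyj
    obtain ⟨hd, hodd, heven⟩ := hf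
    have hpi := hpar i hi1 hi2
    have hpj := hpar j hj1 hj2
    rw [Nat.odd_iff] at hodd
    rw [Nat.even_iff] at heven
    rcases hd with hd | hd
    · have hji : j = i + 1 := sorted_adj (sortedList_sorted z) hi1 hj1 (by omega)
      subst hji
      have := (hgap i hj1 hj2).mp (by omega)
      exact ⟨Or.inl (by omega), Nat.odd_iff.mpr (by omega), Nat.even_iff.mpr (by omega)⟩
    · have hij : i = j + 1 := sorted_adj (sortedList_sorted z) hj1 hi1 (by omega)
      subst hij
      have := (hgap j hi1 hi2).mp (by omega)
      exact ⟨Or.inr (by omega), Nat.odd_iff.mpr (by omega), Nat.even_iff.mpr (by omega)⟩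
  · -- inverse fence-preserving
    intro x₁ x₂ w₁ w₂ h₁ h₂ hf
    obtain ⟨i, hi1, hi2, hzi, hyi⟩ := gammaOf_spec h₁
    obtain ⟨j, hj1, hj2, hzj, hyj⟩ := gammaOf_spec h₂
    subst hzi hyi hzj hyj
    obtain ⟨hd, hodd, heven⟩ := hf
    have hpi := hpar i hi1 hi2
    have hpj := hpar j hj1 hj2
    rw [Nat.odd_iff] at hodd
    rw [Nat.even_iff] at heven
    rcases hd with hd | hd
    · have hji : j = i + 1 := sorted_adj (sortedList_sorted y) hi2 hj2 (by omega)
      subst hji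
      have := (hgap i hj1 hj2).mpr (by omega)
      exact ⟨Or.inl (by omega), Nat.odd_iff.mpr (by omega), Nat.even_iff.mpr (by omega)⟩
    · have hij : i = j + 1 := sorted_adj (sortedList_sorted y) hj2 hi2 (by omega)
      subst hij
      have := (hgap j hi1 hi2).mpr (by omega)
      exact ⟨Or.inr (by omega), Nat.odd_iff.mpr (by omega), Nat.even_iff.mpr (by omega)⟩

lemma dom_comp_epsilon {n : ℕ} (a : PInj n) : (a.comp (epsilon n)).dom = ∅ := by
  ext x
  simp only [Finset.notMem_empty, iff_false, PInj.mem_dom]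
  rintro ⟨v, hv⟩
  rcases Option.bind_eq_some_iff.mp hv with ⟨w, -, hcontra⟩
  simp [epsilon] at hcontra

lemma dom_comp_idOn {n : ℕ} {b : PInj n} {C : Finset ℕ} (hC : C ⊆ b.dom) :
    ((idOn n C).comp b).dom = C := by
  ext x
  rw [PInj.mem_dom]
  constructor
  · rintro ⟨v, hv⟩
    rcases Option.bind_eq_some_iff.mp hv with ⟨w, hw, -⟩
    exact (idOn_f_eq_some.mp hw).2.1
  · intro hx
    rcases PInj.mem_dom.mp (hC hx) with ⟨v, hv⟩
    refine ⟨v, ?_⟩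
    show ((idOn n C).f x).bind b.f = some v
    rw [show (idOn n C).f x = some x from
      idOn_f_eq_some.mpr ⟨rfl, hx, b.dom_subset (hC hx)⟩]
    simpa using hv

lemma dom_comp_of_maps_to {n : ℕ} {γ a : PInj n}
    (h : ∀ ⦃x w : ℕ⦄, γ.f x = some w → w ∈ a.dom) : (γ.comp a).dom = γ.dom := by
  ext x
  rw [PInj.mem_dom, PInj.mem_dom]
  constructor
  · rintro ⟨v, hv⟩
    rcases Option.bind_eq_some_iff.mp hv with ⟨w, hw, -⟩
    exact ⟨w, hw⟩
  · rintro ⟨w, hw⟩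
    rcases PInj.mem_dom.mp (h hw) with ⟨v, hv⟩
    refine ⟨v, ?_⟩
    show (γ.f x).bind a.f = some v
    rw [hw]
    simpa using hv

lemma comp_inv_comp {n : ℕ} {a α : PInj n} (hdom : a.dom = α.dom) :
    (a.comp a.inv).comp α = α := by
  apply PInj.ext'
  funext x
  show ((a.f x).bind a.inv.f).bind α.f = α.f x
  rcases h : a.f x with _ | w
  · have hx : x ∉ a.dom := by
      rw [PInj.mem_dom]
      rintro ⟨v, hv⟩
      rw [h] at hv
      simp at hv
    have hx' : x ∉ α.dom := hdom ▸ hx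
    have hnone : α.f x = none := by
      rcases h' : α.f x with _ | v
      · rfl
      · exact absurd (PInj.mem_dom.mpr ⟨v, h'⟩) hx'
    simp [hnone]
  · have hw : a.inv.f w = some x := PInj.inv_f_eq_some.mpr h
    simp [hw]

/-- Every ideal `I` of `IOF_n^par` equals `I_{P*}` for the
admissible set `P* = {dom(a) : a ∈ I}`. -/
theorem statement_8 (n : ℕ) (hn : 0 < n) (I : Set (PInj n)) (hI : IsIdeal n I) :
    Admissible n {A | ∃ a ∈ I, PInj.dom a = A} ∧
      I = IX n {A | ∃ a ∈ I, PInj.dom a = A} := by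
  obtain ⟨hne, hsub, hid⟩ := hI
  constructor
  · refine ⟨?_, ?_, ?_, ?_⟩
    · rintro A ⟨a, -, rfl⟩
      exact a.dom_subset
    · obtain ⟨a, ha⟩ := hne
      exact ⟨a.comp (epsilon n), (hid a ha (epsilon n) (epsilon_mem_IOF n)).1,
        dom_comp_epsilon a⟩
    · rintro A ⟨a, haI, rfl⟩ B ⟨b, hbI, rfl⟩ C hAC hCB
      exact ⟨(idOn n C).comp b, (hid b hbI (idOn n C) (idOn_mem_IOF n C)).2,
        dom_comp_idOn hCB⟩
    · rintro y ⟨a, haI, rfl⟩ z hzsub hsim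
      have hcard : z.card = (a.dom).card := hsim.1
      have hγIOF : gammaOf n z a.dom hzsub a.dom_subset hcard ∈ IOF n :=
        gammaOf_mem_IOF hsim
      refine ⟨(gammaOf n z a.dom hzsub a.dom_subset hcard).comp a,
        (hid a haI _ hγIOF).2, ?_⟩
      rw [dom_comp_of_maps_to (fun x w h => gammaOf_maps_to h)]
      exact gammaOf_dom
  · ext α
    constructor
    · intro hα
      exact ⟨hsub hα, α, hα, rfl⟩
    · rintro ⟨hαIOF, a, haI, hdom⟩
      have h1 : a.comp a.inv ∈ I := (hid a haI a.inv (PInj.inv_mem_IOF (hsub haI))).1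
      have h2 := (hid _ h1 α hαIOF).1
      rwa [comp_inv_comp hdom] at h2

end IOFpar
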